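/- Let x = (x_1,…,x_R) be a vector of distinct real numbers and c = (c_1,…,c_R) a vector of real numbers. If R is odd, then det(B(x,c)) = 0. If R = 2T is even, then det(B(x,c)) = Σ_P ∏_{{m,n} ∈ P} b_{m,n}(x,c)², where the sum ranges over all partitions P of {1,…,R} into T unordered pairs. -/

import Mathlib

/-- The generalized weighted Hilbert matrix `B(x,c)` with entries
`b_{m,n} = c_m c_n / (x_m - x_n)` for `m ≠ n` and `0` on the diagonal. -/
noncomputable def Bmat {R : ℕ} (x c : Fin R → ℝ) : Matrix (Fin R) (Fin R) ℝ :=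
  Matrix.of fun m n => if m = n then 0 else c m * c n / (x m - x n)

namespace BmatAux

variable {R : ℕ} (x c : Fin R → ℝ)

lemma Bmat_diag (i : Fin R) : Bmat x c i i = 0 := by simp [Bmat]

lemma Bmat_skew (m n : Fin R) : Bmat x c m n = - Bmat x c n m := by
  rcases eq_or_ne m n with h | h
  · simp [h, Bmat]
  · simp only [Bmat, Matrix.of_apply, if_neg h, if_neg h.symm]
    rw [mul_comm (c n) (c m), ← div_neg, neg_sub]

/-- weight of a pair set -/
noncomputable def w (p : Finset (Fin R)) : ℝ :=
  ∏ m ∈ p, ∏ n ∈ p, if m < n then (Bmat x c m n) ^ 2 else 1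

lemma Bmat_sq_comm (m n : Fin R) : Bmat x c m n ^ 2 = Bmat x c n m ^ 2 := by
  rw [Bmat_skew]; ring

lemma key_frac (hx : Function.Injective x) {a u v : Fin R}
    (hau : a ≠ u) (hav : a ≠ v) (huv : u ≠ v) :
    Bmat x c v a * Bmat x c a u
      = Bmat x c v u * ((c a) ^ 2 * ((x a - x u)⁻¹ + (x v - x a)⁻¹)) := by
  have h1 : x a - x u ≠ 0 := sub_ne_zero.2 fun h => hau (hx h)
  have h2 : x v - x a ≠ 0 := sub_ne_zero.2 fun h => hav (hx h).symm
  have h3 : x v - x u ≠ 0 := sub_ne_zero.2 fun h => huv (hx h).symm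
  simp only [Bmat, Matrix.of_apply, if_neg hav.symm, if_neg hau, if_neg (fun h => huv (by exact h.symm) : ¬ v = u)]
  field_simp
  ring

lemma w_pair {a j : Fin R} (haj : a ≠ j) : w x c {a, j} = Bmat x c a j ^ 2 := by
  unfold w
  rw [Finset.prod_pair haj, Finset.prod_pair haj, Finset.prod_pair haj]
  rcases lt_or_gt_of_ne haj with h | h
  · simp [h, not_lt.2 h.le, lt_irrefl]
  · simp [h, not_lt.2 h.le, lt_irrefl, Bmat_sq_comm x c j a]

lemma support_mul_swap {σ : Equiv.Perm (Fin R)} {a u : Fin R}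
    (ha : a ∉ σ.support) (hu : u ∈ σ.support) :
    (σ * Equiv.swap a u).support = insert a σ.support := by
  have hau : a ≠ u := fun h => ha (h ▸ hu)
  have hσa : σ a = a := Equiv.Perm.notMem_support.1 ha
  have hσu : σ u ≠ a := fun h => ha (by rw [← h]; exact Equiv.Perm.apply_mem_support.2 hu)
  ext i
  rcases eq_or_ne i a with rfl | hia
  · rw [Equiv.Perm.mem_support, Equiv.Perm.mul_apply, Equiv.swap_apply_left]
    exact iff_of_true hσu (Finset.mem_insert_self _ _)
  rcases eq_or_ne i u with rfl | hiu
  · rw [Equiv.Perm.mem_support, Equiv.Perm.mul_apply, Equiv.swap_apply_right, hσa]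
    exact iff_of_true hau (Finset.mem_insert_of_mem hu)
  · rw [Equiv.Perm.mem_support, Equiv.Perm.mul_apply,
      Equiv.swap_apply_of_ne_of_ne hia hiu, ← Equiv.Perm.mem_support, Finset.mem_insert]
    exact ⟨fun h => Or.inr h, fun h => h.resolve_left hia⟩

lemma support_mul_swap' {σ : Equiv.Perm (Fin R)} {a j : Fin R}
    (ha : a ∉ σ.support) (hj : j ∉ σ.support) (haj : a ≠ j) :
    (σ * Equiv.swap a j).support = insert a (insert j σ.support) := by
  have hσa : σ a = a := Equiv.Perm.notMem_support.1 ha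
  have hσj : σ j = j := Equiv.Perm.notMem_support.1 hj
  ext i
  rcases eq_or_ne i a with rfl | hia
  · rw [Equiv.Perm.mem_support, Equiv.Perm.mul_apply, Equiv.swap_apply_left, hσj]
    exact iff_of_true haj.symm (Finset.mem_insert_self _ _)
  rcases eq_or_ne i j with rfl | hij
  · rw [Equiv.Perm.mem_support, Equiv.Perm.mul_apply, Equiv.swap_apply_right, hσa,
      Finset.mem_insert, Finset.mem_insert]
    exact iff_of_true haj (Or.inr (Or.inl rfl))
  · rw [Equiv.Perm.mem_support, Equiv.Perm.mul_apply,
      Equiv.swap_apply_of_ne_of_ne hia hij, ← Equiv.Perm.mem_support,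
      Finset.mem_insert, Finset.mem_insert]
    exact ⟨fun h => Or.inr (Or.inr h), fun h => (h.resolve_left hia).resolve_left hij⟩

lemma support_mul_swap_two {σ : Equiv.Perm (Fin R)} {a : Fin R}
    (ha : a ∈ σ.support) (h2 : σ (σ a) = a) :
    (σ * Equiv.swap a (σ a)).support = (σ.support.erase a).erase (σ a) := by
  have haa : σ a ≠ a := Equiv.Perm.mem_support.1 ha
  ext i
  rcases eq_or_ne i a with rfl | hia
  · rw [Equiv.Perm.mem_support, Equiv.Perm.mul_apply, Equiv.swap_apply_left, h2]
    simp
  rcases eq_or_ne i (σ a) with rfl | hij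
  · rw [Equiv.Perm.mem_support, Equiv.Perm.mul_apply, Equiv.swap_apply_right]
    simp
  · rw [Equiv.Perm.mem_support, Equiv.Perm.mul_apply,
      Equiv.swap_apply_of_ne_of_ne hia hij, ← Equiv.Perm.mem_support,
      Finset.mem_erase, Finset.mem_erase]
    exact ⟨fun h => ⟨hij, hia, h⟩, fun h => h.2.2⟩

lemma support_mul_swap_inv {σ : Equiv.Perm (Fin R)} {a : Fin R}
    (ha : a ∈ σ.support) (h3 : σ (σ a) ≠ a) :
    (σ * Equiv.swap a (σ⁻¹ a)).support = σ.support.erase a := by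
  have haa : σ a ≠ a := Equiv.Perm.mem_support.1 ha
  have hu : σ (σ⁻¹ a) = a := σ.apply_symm_apply a
  have hua : σ⁻¹ a ≠ a := fun h => haa (by conv_lhs => rw [← h, hu])
  have hsa : σ a ≠ σ⁻¹ a := fun h => h3 (by rw [h, hu])
  ext i
  rcases eq_or_ne i a with rfl | hia
  · rw [Equiv.Perm.mem_support, Equiv.Perm.mul_apply, Equiv.swap_apply_left, hu]
    simp
  rcases eq_or_ne i (σ⁻¹ a) with rfl | hij
  · rw [Equiv.Perm.mem_support, Equiv.Perm.mul_apply, Equiv.swap_apply_right,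
      Finset.mem_erase, Equiv.Perm.mem_support]
    refine iff_of_true hsa ⟨hua, ?_⟩
    rw [hu]
    exact fun h => hua h.symm
  · rw [Equiv.Perm.mem_support, Equiv.Perm.mul_apply,
      Equiv.swap_apply_of_ne_of_ne hia hij, ← Equiv.Perm.mem_support, Finset.mem_erase]
    exact ⟨fun h => ⟨hia, h⟩, fun h => h.2⟩

/-- `D S` : signed sum over permutations with support `S`. -/
noncomputable def D (S : Finset (Fin R)) : ℝ :=
  ∑ σ ∈ Finset.univ.filter (fun σ : Equiv.Perm (Fin R) => σ.support = S),
    ((Equiv.Perm.sign σ : ℤ) : ℝ) * ∏ i ∈ S, Bmat x c (σ i) i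

/-- the set of pair partitions of `S` -/
def PP (S : Finset (Fin R)) : Finset (Finset (Finset (Fin R))) :=
  Finset.univ.filter
    (fun P : Finset (Finset (Fin R)) =>
      (∀ p ∈ P, p.card = 2) ∧
      (∀ p ∈ P, ∀ q ∈ P, p ≠ q → Disjoint p q) ∧
      P.biUnion id = S)

/-- `M S` : sum over pair partitions of `S`. -/
noncomputable def M (S : Finset (Fin R)) : ℝ :=
  ∑ P ∈ PP S, ∏ p ∈ P, w x c p

lemma D_rec_two {S : Finset (Fin R)} {a : Fin R} (ha : a ∈ S) :
    ∑ σ ∈ Finset.univ.filter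
        (fun σ : Equiv.Perm (Fin R) => σ.support = S ∧ σ (σ a) = a),
      ((Equiv.Perm.sign σ : ℤ) : ℝ) * ∏ i ∈ S, Bmat x c (σ i) i
    = ∑ j ∈ S.erase a, Bmat x c a j ^ 2 * D x c ((S.erase a).erase j) := by
  classical
  have hD : ∀ j ∈ S.erase a, Bmat x c a j ^ 2 * D x c ((S.erase a).erase j)
      = ∑ σ' ∈ Finset.univ.filter
          (fun σ' : Equiv.Perm (Fin R) => σ'.support = (S.erase a).erase j),
        Bmat x c a j ^ 2 *
          (((Equiv.Perm.sign σ' : ℤ) : ℝ) * ∏ i ∈ (S.erase a).erase j, Bmat x c (σ' i) i) := by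
    intro j _
    rw [D, Finset.mul_sum]
  rw [Finset.sum_congr rfl hD, Finset.sum_sigma']
  refine Finset.sum_nbij' (fun σ => ⟨σ a, σ * Equiv.swap a (σ a)⟩)
    (fun q => q.2 * Equiv.swap a q.1) ?_ ?_ ?_ ?_ ?_
  · intro σ hσ
    simp only [Finset.mem_filter, Finset.mem_univ, true_and] at hσ
    obtain ⟨hsupp, hp⟩ := hσ
    have haS : a ∈ σ.support := hsupp ▸ ha
    have h1 : σ a ≠ a := Equiv.Perm.mem_support.1 haS
    refine Finset.mem_sigma.2 ⟨Finset.mem_erase.2 ⟨h1, ?_⟩, ?_⟩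
    · rw [← hsupp]; exact Equiv.Perm.apply_mem_support.2 haS
    · simp only [Finset.mem_filter, Finset.mem_univ, true_and]
      rw [support_mul_swap_two haS hp, hsupp]
  · rintro ⟨j₀, σ'⟩ hq
    rw [Finset.mem_sigma] at hq
    obtain ⟨hj₀, hσ'⟩ := hq
    simp only [Finset.mem_filter, Finset.mem_univ, true_and] at hσ'
    have hj₀' := Finset.mem_erase.1 hj₀
    have hanotin : a ∉ σ'.support := by rw [hσ']; simp
    have hjnotin : j₀ ∉ σ'.support := by rw [hσ']; simp
    have hfa : σ' a = a := Equiv.Perm.notMem_support.1 hanotin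
    have hfj : σ' j₀ = j₀ := Equiv.Perm.notMem_support.1 hjnotin
    have haj : a ≠ j₀ := Ne.symm hj₀'.1
    simp only [Finset.mem_filter, Finset.mem_univ, true_and]
    constructor
    · rw [support_mul_swap' hanotin hjnotin haj, hσ', Finset.insert_erase hj₀,
        Finset.insert_erase ha]
    · have e1 : (σ' * Equiv.swap a j₀) a = j₀ := by
        rw [Equiv.Perm.mul_apply, Equiv.swap_apply_left, hfj]
      rw [e1, Equiv.Perm.mul_apply, Equiv.swap_apply_right, hfa]
  · intro σ _
    dsimp only
    rw [mul_assoc, Equiv.swap_mul_self, mul_one]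
  · rintro ⟨j₀, σ'⟩ hq
    rw [Finset.mem_sigma] at hq
    obtain ⟨hj₀, hσ'⟩ := hq
    simp only [Finset.mem_filter, Finset.mem_univ, true_and] at hσ'
    have hjnotin : j₀ ∉ σ'.support := by rw [hσ']; simp
    have hfj : σ' j₀ = j₀ := Equiv.Perm.notMem_support.1 hjnotin
    have e1 : (σ' * Equiv.swap a j₀) a = j₀ := by
      rw [Equiv.Perm.mul_apply, Equiv.swap_apply_left, hfj]
    dsimp only
    rw [e1, mul_assoc, Equiv.swap_mul_self, mul_one]
  · intro σ hσ
    simp only [Finset.mem_filter, Finset.mem_univ, true_and] at hσ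
    obtain ⟨hsupp, hp⟩ := hσ
    have haS : a ∈ σ.support := hsupp ▸ ha
    have h1 : σ a ≠ a := Equiv.Perm.mem_support.1 haS
    have hja : σ a ∈ S.erase a := by
      refine Finset.mem_erase.2 ⟨h1, ?_⟩
      rw [← hsupp]; exact Equiv.Perm.apply_mem_support.2 haS
    have hsign : ((Equiv.Perm.sign (σ * Equiv.swap a (σ a)) : ℤ) : ℝ)
        = -((Equiv.Perm.sign σ : ℤ) : ℝ) := by
      rw [Equiv.Perm.sign_mul, Equiv.Perm.sign_swap (Ne.symm h1)]
      push_cast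
      ring
    have hprod : ∏ i ∈ S, Bmat x c (σ i) i
        = Bmat x c (σ a) a * (Bmat x c a (σ a) *
            ∏ i ∈ (S.erase a).erase (σ a), Bmat x c ((σ * Equiv.swap a (σ a)) i) i) := by
      conv_lhs => rw [← Finset.insert_erase ha]
      rw [Finset.prod_insert (Finset.notMem_erase a S)]
      congr 1
      rw [← Finset.mul_prod_erase (S.erase a) (fun i => Bmat x c (σ i) i) hja, hp]
      congr 1
      refine Finset.prod_congr rfl fun i hi => ?_
      obtain ⟨hi1, hi2⟩ := Finset.mem_erase.1 hi
      obtain ⟨hi3, _⟩ := Finset.mem_erase.1 hi2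
      rw [Equiv.Perm.mul_apply, Equiv.swap_apply_of_ne_of_ne hi3 hi1]
    dsimp only
    rw [hprod, hsign, Bmat_skew x c (σ a) a]
    ring

lemma D_rec_three (hx : Function.Injective x) {S : Finset (Fin R)} {a : Fin R} (ha : a ∈ S) :
    ∑ σ ∈ Finset.univ.filter
        (fun σ : Equiv.Perm (Fin R) => σ.support = S ∧ ¬ σ (σ a) = a),
      ((Equiv.Perm.sign σ : ℤ) : ℝ) * ∏ i ∈ S, Bmat x c (σ i) i = 0 := by
  classical
  have hstep : ∑ σ ∈ Finset.univ.filter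
        (fun σ : Equiv.Perm (Fin R) => σ.support = S ∧ ¬ σ (σ a) = a),
      ((Equiv.Perm.sign σ : ℤ) : ℝ) * ∏ i ∈ S, Bmat x c (σ i) i
      = ∑ q ∈ (S.erase a).sigma (fun _ => Finset.univ.filter
          (fun σ' : Equiv.Perm (Fin R) => σ'.support = S.erase a)),
        ((Equiv.Perm.sign (q.2 * Equiv.swap a q.1) : ℤ) : ℝ) *
          ∏ i ∈ S, Bmat x c ((q.2 * Equiv.swap a q.1) i) i := by
    refine Finset.sum_nbij' (fun σ => ⟨σ⁻¹ a, σ * Equiv.swap a (σ⁻¹ a)⟩)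
      (fun q => q.2 * Equiv.swap a q.1) ?_ ?_ ?_ ?_ ?_
    · intro σ hσ
      simp only [Finset.mem_filter, Finset.mem_univ, true_and] at hσ
      obtain ⟨hsupp, hp⟩ := hσ
      have haS : a ∈ σ.support := hsupp ▸ ha
      have h1 : σ a ≠ a := Equiv.Perm.mem_support.1 haS
      have hua : σ⁻¹ a ≠ a := fun h => h1 (by conv_lhs => rw [← h, show σ (σ⁻¹ a) = a from σ.apply_symm_apply a])
      have huS : σ⁻¹ a ∈ σ.support := by
        rw [← Equiv.Perm.support_inv]
        exact Equiv.Perm.apply_mem_support.2 (by rw [Equiv.Perm.support_inv]; exact haS)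
      refine Finset.mem_sigma.2 ⟨Finset.mem_erase.2 ⟨hua, hsupp ▸ huS⟩, ?_⟩
      simp only [Finset.mem_filter, Finset.mem_univ, true_and]
      rw [support_mul_swap_inv haS hp, hsupp]
    · rintro ⟨u, σ'⟩ hq
      rw [Finset.mem_sigma] at hq
      obtain ⟨hu, hσ'⟩ := hq
      simp only [Finset.mem_filter, Finset.mem_univ, true_and] at hσ'
      obtain ⟨hua, huS⟩ := Finset.mem_erase.1 hu
      have hanotin : a ∉ σ'.support := by rw [hσ']; simp
      have huin : u ∈ σ'.support := by rw [hσ']; exact hu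
      have hfa : σ' a = a := Equiv.Perm.notMem_support.1 hanotin
      simp only [Finset.mem_filter, Finset.mem_univ, true_and]
      constructor
      · rw [support_mul_swap hanotin huin, hσ', Finset.insert_erase ha]
      · have e1 : (σ' * Equiv.swap a u) a = σ' u := by
          rw [Equiv.Perm.mul_apply, Equiv.swap_apply_left]
        have hvS : σ' u ∈ σ'.support := Equiv.Perm.apply_mem_support.2 huin
        have hva : σ' u ≠ a := fun h => hanotin (h ▸ hvS)
        have hvu : σ' u ≠ u := fun h => Equiv.Perm.mem_support.1 huin h
        rw [e1, Equiv.Perm.mul_apply, Equiv.swap_apply_of_ne_of_ne hva hvu]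
        intro h
        exact hanotin (h ▸ Equiv.Perm.apply_mem_support.2 hvS)
    · intro σ _
      dsimp only
      rw [mul_assoc, Equiv.swap_mul_self, mul_one]
    · rintro ⟨u, σ'⟩ hq
      rw [Finset.mem_sigma] at hq
      obtain ⟨hu, hσ'⟩ := hq
      simp only [Finset.mem_filter, Finset.mem_univ, true_and] at hσ'
      have hanotin : a ∉ σ'.support := by rw [hσ']; simp
      have hfa : σ' a = a := Equiv.Perm.notMem_support.1 hanotin
      have e1 : (σ' * Equiv.swap a u)⁻¹ a = u := by
        rw [Equiv.Perm.inv_eq_iff_eq, Equiv.Perm.mul_apply, Equiv.swap_apply_right, hfa]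
      dsimp only
      rw [e1, mul_assoc, Equiv.swap_mul_self, mul_one]
    · intro σ hσ
      dsimp only
      rw [mul_assoc, Equiv.swap_mul_self, mul_one]
  rw [hstep, Finset.sum_sigma, Finset.sum_comm]
  refine Finset.sum_eq_zero fun σ' hσ' => ?_
  simp only [Finset.mem_filter, Finset.mem_univ, true_and] at hσ'
  have hanotin : a ∉ σ'.support := by rw [hσ']; simp
  have hfa : σ' a = a := Equiv.Perm.notMem_support.1 hanotin
  have hterm : ∀ u ∈ S.erase a,
      ((Equiv.Perm.sign (σ' * Equiv.swap a u) : ℤ) : ℝ) *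
        ∏ i ∈ S, Bmat x c ((σ' * Equiv.swap a u) i) i
      = (-((Equiv.Perm.sign σ' : ℤ) : ℝ) * (∏ i ∈ S.erase a, Bmat x c (σ' i) i) * (c a) ^ 2) *
          ((x a - x u)⁻¹ + (x (σ' u) - x a)⁻¹) := by
    intro u hu
    obtain ⟨hua, huS⟩ := Finset.mem_erase.1 hu
    have huin : u ∈ σ'.support := by rw [hσ']; exact hu
    have hvS : σ' u ∈ σ'.support := Equiv.Perm.apply_mem_support.2 huin
    have hva : σ' u ≠ a := fun h => hanotin (h ▸ hvS)
    have hvu : σ' u ≠ u := fun h => Equiv.Perm.mem_support.1 huin h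
    have hsign : ((Equiv.Perm.sign (σ' * Equiv.swap a u) : ℤ) : ℝ)
        = -((Equiv.Perm.sign σ' : ℤ) : ℝ) := by
      rw [Equiv.Perm.sign_mul, Equiv.Perm.sign_swap (Ne.symm hua)]
      push_cast
      ring
    have hprod : ∏ i ∈ S, Bmat x c ((σ' * Equiv.swap a u) i) i
        = Bmat x c (σ' u) a * (Bmat x c a u *
            ∏ i ∈ (S.erase a).erase u, Bmat x c (σ' i) i) := by
      conv_lhs => rw [← Finset.insert_erase ha]
      rw [Finset.prod_insert (Finset.notMem_erase a S)]
      congr 1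
      · rw [Equiv.Perm.mul_apply, Equiv.swap_apply_left]
      rw [← Finset.mul_prod_erase (S.erase a) (fun i => Bmat x c ((σ' * Equiv.swap a u) i) i) hu]
      congr 1
      · rw [Equiv.Perm.mul_apply, Equiv.swap_apply_right, hfa]
      refine Finset.prod_congr rfl fun i hi => ?_
      obtain ⟨hi1, hi2⟩ := Finset.mem_erase.1 hi
      obtain ⟨hi3, _⟩ := Finset.mem_erase.1 hi2
      rw [Equiv.Perm.mul_apply, Equiv.swap_apply_of_ne_of_ne hi3 hi1]
    have hkey : Bmat x c (σ' u) a * Bmat x c a u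
        = Bmat x c (σ' u) u * ((c a) ^ 2 * ((x a - x u)⁻¹ + (x (σ' u) - x a)⁻¹)) :=
      key_frac x c hx (Ne.symm hua) (Ne.symm hva) (Ne.symm hvu)
    have hback : Bmat x c (σ' u) u * ∏ i ∈ (S.erase a).erase u, Bmat x c (σ' i) i = (∏ i ∈ S.erase a, Bmat x c (σ' i) i) :=
      Finset.mul_prod_erase (S.erase a) (fun i => Bmat x c (σ' i) i) hu
    rw [hsign, hprod, ← mul_assoc (Bmat x c (σ' u) a), hkey]
    rw [← hback]
    ring
  rw [Finset.sum_congr rfl hterm, ← Finset.mul_sum, Finset.sum_add_distrib]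
  have hrei : ∑ u ∈ S.erase a, (x (σ' u) - x a)⁻¹ = ∑ u ∈ S.erase a, (x u - x a)⁻¹ := by
    refine Equiv.Perm.sum_comp σ' (S.erase a) (fun v => (x v - x a)⁻¹) ?_
    intro i hi
    rw [← hσ']
    exact Equiv.Perm.mem_support.2 hi
  rw [hrei, ← Finset.sum_add_distrib]
  have hz : ∀ u ∈ S.erase a, (x a - x u)⁻¹ + (x u - x a)⁻¹ = 0 := by
    intro u _
    rw [show x u - x a = -(x a - x u) by ring, inv_neg]
    ring
  rw [Finset.sum_congr rfl hz, Finset.sum_const_zero, mul_zero]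

lemma D_rec (hx : Function.Injective x) {S : Finset (Fin R)} {a : Fin R} (ha : a ∈ S) :
    D x c S = ∑ j ∈ S.erase a, Bmat x c a j ^ 2 * D x c ((S.erase a).erase j) := by
  classical
  rw [D, ← Finset.sum_filter_add_sum_filter_not
    (Finset.univ.filter fun σ : Equiv.Perm (Fin R) => σ.support = S)
    (fun σ => σ (σ a) = a), Finset.filter_filter, Finset.filter_filter,
    D_rec_two x c ha, D_rec_three x c hx ha, add_zero]

lemma D_empty : D x c (∅ : Finset (Fin R)) = 1 := by
  classical
  have h : Finset.univ.filter (fun σ : Equiv.Perm (Fin R) => σ.support = ∅) = {1} := by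
    ext σ
    simp [Equiv.Perm.support_eq_empty_iff]
  rw [D, h]
  simp

lemma M_empty : M x c (∅ : Finset (Fin R)) = 1 := by
  classical
  have h : PP (R := R) ∅ = {∅} := by
    ext P
    simp only [PP, Finset.mem_filter, Finset.mem_univ, true_and, Finset.mem_singleton]
    constructor
    · rintro ⟨h2, _, hbu⟩
      by_contra hne
      obtain ⟨p, hp⟩ := Finset.nonempty_iff_ne_empty.2 hne
      have : p.Nonempty := Finset.card_pos.1 (by rw [h2 p hp]; norm_num)
      obtain ⟨t, ht⟩ := this
      have : t ∈ P.biUnion id := Finset.mem_biUnion.2 ⟨p, hp, ht⟩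
      rw [hbu] at this
      exact absurd this (Finset.notMem_empty t)
    · rintro rfl
      exact ⟨by simp, by simp, by simp⟩
  rw [M, h]
  simp

/-- the "other" element of a pair -/
def other (p : Finset (Fin R)) (a : Fin R) : Fin R := WithTop.untopD a (p.erase a).min

lemma other_pair {a j : Fin R} (haj : a ≠ j) : other {a, j} a = j := by
  have : ({a, j} : Finset (Fin R)).erase a = {j} := by
    rw [show ({a, j} : Finset (Fin R)) = insert a {j} from rfl,
      Finset.erase_insert (by simp [haj])]
  rw [other, this, Finset.min_singleton, WithTop.untopD_coe]

lemma pair_decomp {p : Finset (Fin R)} {a : Fin R} (h2 : p.card = 2) (hap : a ∈ p) :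
    p = {a, other p a} ∧ a ≠ other p a := by
  obtain ⟨u, v, huv, rfl⟩ := Finset.card_eq_two.1 h2
  rcases Finset.mem_insert.1 hap with rfl | hv
  · rw [other_pair huv]
    exact ⟨rfl, huv⟩
  · rw [Finset.mem_singleton] at hv
    subst hv
    rw [Finset.pair_comm u a, other_pair (Ne.symm huv)]
    exact ⟨rfl, Ne.symm huv⟩

lemma M_rec {S : Finset (Fin R)} {a : Fin R} (ha : a ∈ S) :
    M x c S = ∑ j ∈ S.erase a, Bmat x c a j ^ 2 * M x c ((S.erase a).erase j) := by
  classical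
  have stepA : M x c S
      = ∑ P ∈ PP S, ∑ p ∈ P.filter (fun p => a ∈ p), ∏ q ∈ P, w x c q := by
    rw [M]
    refine Finset.sum_congr rfl fun P hP => ?_
    simp only [PP, Finset.mem_filter, Finset.mem_univ, true_and] at hP
    obtain ⟨h2, hdisj, hbu⟩ := hP
    have haU : a ∈ P.biUnion id := by rw [hbu]; exact ha
    obtain ⟨p₀, hp₀P, hap₀⟩ := Finset.mem_biUnion.1 haU
    have huniq : P.filter (fun p => a ∈ p) = {p₀} := by
      ext q
      simp only [Finset.mem_filter, Finset.mem_singleton]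
      constructor
      · rintro ⟨hqP, haq⟩
        by_contra hne
        exact Finset.disjoint_left.1 (hdisj q hqP p₀ hp₀P hne) haq hap₀
      · rintro rfl
        exact ⟨hp₀P, hap₀⟩
    rw [huniq, Finset.sum_singleton]
  rw [stepA, Finset.sum_sigma']
  have stepC : ∑ q ∈ (PP S).sigma (fun P => P.filter (fun p => a ∈ p)),
        ∏ r ∈ q.1, w x c r
      = ∑ q ∈ (S.erase a).sigma (fun j => PP ((S.erase a).erase j)),
          Bmat x c a q.1 ^ 2 * ∏ r ∈ q.2, w x c r := by
    refine Finset.sum_nbij' (fun q => ⟨other q.2 a, q.1.erase q.2⟩)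
      (fun q => ⟨insert {a, q.1} q.2, {a, q.1}⟩) ?_ ?_ ?_ ?_ ?_
    · rintro ⟨P, p⟩ hq
      rw [Finset.mem_sigma] at hq
      obtain ⟨hP, hp⟩ := hq
      rw [Finset.mem_filter] at hp
      obtain ⟨hpP, hap⟩ := hp
      simp only [PP, Finset.mem_filter, Finset.mem_univ, true_and] at hP
      obtain ⟨h2, hdisj, hbu⟩ := hP
      set j := other p a with hjdef
      obtain ⟨hpair, haj⟩ := pair_decomp (h2 p hpP) hap
      have hjp : j ∈ p := by rw [hpair]; simp [hjdef]
      have hjS : j ∈ S := by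
        rw [← hbu]
        exact Finset.mem_biUnion.2 ⟨p, hpP, hjp⟩
      refine Finset.mem_sigma.2 ⟨Finset.mem_erase.2 ⟨Ne.symm haj, hjS⟩, ?_⟩
      simp only [PP, Finset.mem_filter, Finset.mem_univ, true_and]
      refine ⟨fun q hq => h2 q (Finset.mem_of_mem_erase hq),
        fun q hq r hr hne =>
          hdisj q (Finset.mem_of_mem_erase hq) r (Finset.mem_of_mem_erase hr) hne, ?_⟩
      ext t
      simp only [Finset.mem_biUnion, Finset.mem_erase, id]
      constructor
      · rintro ⟨q, ⟨hqp, hqP⟩, htq⟩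
        have htS : t ∈ S := by
          rw [← hbu]
          exact Finset.mem_biUnion.2 ⟨q, hqP, htq⟩
        have htp : t ∉ p := fun htp =>
          Finset.disjoint_left.1 (hdisj q hqP p hpP hqp) htq htp
        have hta : t ≠ a := fun h => htp (h ▸ hap)
        have htj : t ≠ j := fun h => htp (h ▸ hjp)
        exact ⟨htj, hta, htS⟩
      · rintro ⟨htj, hta, htS⟩
        obtain ⟨q, hqP, htq⟩ := Finset.mem_biUnion.1 (show t ∈ P.biUnion id by
          rw [hbu]; exact htS)
        refine ⟨q, ⟨?_, hqP⟩, htq⟩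
        rintro rfl
        rw [hpair] at htq
        rcases Finset.mem_insert.1 htq with h | h
        · exact hta h
        · exact htj (Finset.mem_singleton.1 h)
    · rintro ⟨j, P'⟩ hq
      rw [Finset.mem_sigma] at hq
      obtain ⟨hj, hP'⟩ := hq
      obtain ⟨hja, hjS⟩ := Finset.mem_erase.1 hj
      have haj : a ≠ j := Ne.symm hja
      simp only [PP, Finset.mem_filter, Finset.mem_univ, true_and] at hP'
      obtain ⟨h2', hdisj', hbu'⟩ := hP'
      have hmem : ∀ t, t ∈ P'.biUnion id → t ≠ j ∧ t ≠ a ∧ t ∈ S := by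
        intro t ht
        rw [hbu'] at ht
        obtain ⟨htj, ht2⟩ := Finset.mem_erase.1 ht
        obtain ⟨hta, htS⟩ := Finset.mem_erase.1 ht2
        exact ⟨htj, hta, htS⟩
      refine Finset.mem_sigma.2 ⟨?_, ?_⟩
      · simp only [PP, Finset.mem_filter, Finset.mem_univ, true_and]
        refine ⟨?_, ?_, ?_⟩
        · intro q hq
          rcases Finset.mem_insert.1 hq with rfl | hq'
          · exact Finset.card_pair haj
          · exact h2' q hq'
        · intro q hq r hr hne
          have hdisj2 : ∀ r ∈ P', Disjoint ({a, j} : Finset (Fin R)) r := by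
            intro r hr
            rw [Finset.disjoint_left]
            intro t ht htr
            have := hmem t (Finset.mem_biUnion.2 ⟨r, hr, htr⟩)
            rcases Finset.mem_insert.1 ht with rfl | h
            · exact this.2.1 rfl
            · exact this.1 (Finset.mem_singleton.1 h)
          rcases Finset.mem_insert.1 hq with rfl | hq' <;>
            rcases Finset.mem_insert.1 hr with rfl | hr'
          · exact absurd rfl hne
          · exact hdisj2 r hr'
          · exact (hdisj2 q hq').symm
          · exact hdisj' q hq' r hr' hne
        · rw [Finset.biUnion_insert, hbu']
          ext t
          simp only [Finset.mem_union, Finset.mem_insert, Finset.mem_singleton,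
            Finset.mem_erase, id_eq]
          constructor
          · rintro ((rfl | rfl) | ⟨_, _, htS⟩)
            · exact ha
            · exact hjS
            · exact htS
          · intro htS
            by_cases h1 : t = a
            · exact Or.inl (Or.inl h1)
            by_cases h2 : t = j
            · exact Or.inl (Or.inr h2)
            · exact Or.inr ⟨h2, h1, htS⟩
      · rw [Finset.mem_filter]
        exact ⟨Finset.mem_insert_self _ _, Finset.mem_insert_self a {j}⟩
    · rintro ⟨P, p⟩ hq
      rw [Finset.mem_sigma] at hq
      obtain ⟨hP, hp⟩ := hq
      rw [Finset.mem_filter] at hp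
      obtain ⟨hpP, hap⟩ := hp
      simp only [PP, Finset.mem_filter, Finset.mem_univ, true_and] at hP
      obtain ⟨h2, _, _⟩ := hP
      obtain ⟨hpair, haj⟩ := pair_decomp (h2 p hpP) hap
      dsimp only
      rw [← hpair, Finset.insert_erase hpP]
    · rintro ⟨j, P'⟩ hq
      rw [Finset.mem_sigma] at hq
      obtain ⟨hj, hP'⟩ := hq
      obtain ⟨hja, hjS⟩ := Finset.mem_erase.1 hj
      have haj : a ≠ j := Ne.symm hja
      simp only [PP, Finset.mem_filter, Finset.mem_univ, true_and] at hP'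
      obtain ⟨_, _, hbu'⟩ := hP'
      have hnotmem : ({a, j} : Finset (Fin R)) ∉ P' := by
        intro h
        have : a ∈ P'.biUnion id :=
          Finset.mem_biUnion.2 ⟨{a, j}, h, Finset.mem_insert_self a {j}⟩
        rw [hbu'] at this
        exact (Finset.mem_erase.1 (Finset.mem_erase.1 this).2).1 rfl
      dsimp only
      rw [other_pair haj, Finset.erase_insert hnotmem]
    · rintro ⟨P, p⟩ hq
      rw [Finset.mem_sigma] at hq
      obtain ⟨hP, hp⟩ := hq
      rw [Finset.mem_filter] at hp
      obtain ⟨hpP, hap⟩ := hp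
      simp only [PP, Finset.mem_filter, Finset.mem_univ, true_and] at hP
      obtain ⟨h2, _, _⟩ := hP
      obtain ⟨hpair, haj⟩ := pair_decomp (h2 p hpP) hap
      dsimp only
      rw [← Finset.mul_prod_erase P (w x c) hpP]
      congr 1
      conv_lhs => rw [hpair]
      rw [w_pair x c haj]
  rw [stepC, Finset.sum_sigma]
  refine Finset.sum_congr rfl fun j hj => ?_
  rw [M, Finset.mul_sum]

lemma D_eq_M (hx : Function.Injective x) (S : Finset (Fin R)) : D x c S = M x c S := by
  classical
  induction S using Finset.strongInductionOn with
  | _ S ih =>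
    rcases S.eq_empty_or_nonempty with rfl | ⟨a, ha⟩
    · rw [D_empty, M_empty]
    · rw [D_rec x c hx ha, M_rec x c ha]
      refine Finset.sum_congr rfl fun j hj => ?_
      rw [ih _ (Finset.ssubset_of_subset_of_ssubset
        (Finset.erase_subset _ _) (Finset.erase_ssubset ha))]

lemma det_eq_D : (Bmat x c).det = D x c Finset.univ := by
  classical
  rw [Matrix.det_apply, D,
    ← Finset.sum_filter_add_sum_filter_not Finset.univ
      (fun σ : Equiv.Perm (Fin R) => σ.support = Finset.univ)]
  have h0 : ∑ σ ∈ Finset.univ.filter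
      (fun σ : Equiv.Perm (Fin R) => ¬ σ.support = Finset.univ),
      Equiv.Perm.sign σ • ∏ i, Bmat x c (σ i) i = 0 := by
    refine Finset.sum_eq_zero fun σ hσ => ?_
    simp only [Finset.mem_filter, Finset.mem_univ, true_and] at hσ
    obtain ⟨i, hi⟩ : ∃ i, σ i = i := by
      by_contra h
      push_neg at h
      exact hσ (by ext i; simp [Equiv.Perm.mem_support, h i])
    have : ∏ i, Bmat x c (σ i) i = 0 :=
      Finset.prod_eq_zero (Finset.mem_univ i) (by rw [hi]; exact Bmat_diag x c i)
    rw [this, smul_zero]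
  rw [h0, add_zero]
  refine Finset.sum_congr rfl fun σ hσ => ?_
  simp only [Units.smul_def, zsmul_eq_mul]

end BmatAux

theorem det_Bmat {R : ℕ} (x c : Fin R → ℝ) (hx : Function.Injective x) :
    (Odd R → (Bmat x c).det = 0) ∧
    (Even R → (Bmat x c).det =
      ∑ P ∈ Finset.univ.filter
        (fun P : Finset (Finset (Fin R)) =>
          (∀ p ∈ P, p.card = 2) ∧
          (∀ p ∈ P, ∀ q ∈ P, p ≠ q → Disjoint p q) ∧
          P.biUnion id = Finset.univ),
        ∏ p ∈ P, ∏ m ∈ p, ∏ n ∈ p, if m < n then (Bmat x c m n) ^ 2 else 1) := by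
  constructor
  · intro hodd
    have ht : (Bmat x c).transpose = -(Bmat x c) := by
      ext m n
      rw [Matrix.transpose_apply, Matrix.neg_apply, BmatAux.Bmat_skew]
    have h1 : (Bmat x c).det = (-1 : ℝ) ^ R * (Bmat x c).det := by
      conv_lhs => rw [← Matrix.det_transpose, ht, Matrix.det_neg]
      simp
    rw [hodd.neg_one_pow] at h1
    linarith
  · intro _
    rw [BmatAux.det_eq_D, BmatAux.D_eq_M x c hx]
    rfl
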